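/- Let B : ℝ → ℝ satisfy B(ω+1) = B(ω) for all ω ∈ ℝ and B(ω) = -log ω + ω·B(1/ω) for every irrational ω ∈ (0,1). Fix a natural number q ≥ 1, let γ = (√5−1)/2 and ω_n = 1/(q + 1/(n+γ)) for n ≥ 1, and set η_n = |ω_n − 1/q|. Then there exist constants 0 < c ≤ C (depending on q and B(γ)) such that c·e^(−q·B(ω_n)) ≤ η_n ≤ C·e^(−q·B(ω_n)) for all n ≥ 1. -/

import Mathlib

open Real

private lemma Bper_nat (B : ℝ → ℝ) (hper : ∀ ω : ℝ, B (ω + 1) = B ω) :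
    ∀ (k : ℕ) (x : ℝ), B (x + k) = B x := by
  intro k
  induction k with
  | zero => intro x; simp
  | succ k ih =>
    intro x
    have h : (x : ℝ) + ((k : ℕ) + 1 : ℕ) = (x + (k : ℕ)) + 1 := by push_cast; ring
    rw [h, hper, ih]

set_option maxHeartbeats 1600000 in
/-- For a Bryuno-type function `B` and the rotation numbers
`ω_n = 1/(q + 1/(n+γ))` tending to the resonance `1/q`, the distance
`η_n = |ω_n - 1/q|` to the resonance is comparable with `e^(-q·B(ω_n))`. -/
theorem distance_to_resonance_comparable (B : ℝ → ℝ)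
    (hper : ∀ ω : ℝ, B (ω + 1) = B ω)
    (heq : ∀ ω : ℝ, ω ∈ Set.Ioo (0:ℝ) 1 → Irrational ω →
      B ω = -Real.log ω + ω * B (1 / ω))
    (q : ℕ) (hq : 1 ≤ q) :
    ∃ c C : ℝ, 0 < c ∧ c ≤ C ∧ ∀ n : ℕ, 1 ≤ n →
      c * Real.exp (-(q : ℝ) * B (1 / ((q : ℝ) + 1 / ((n : ℝ) + (Real.sqrt 5 - 1) / 2)))) ≤
        |1 / ((q : ℝ) + 1 / ((n : ℝ) + (Real.sqrt 5 - 1) / 2)) - 1 / (q : ℝ)| ∧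
      |1 / ((q : ℝ) + 1 / ((n : ℝ) + (Real.sqrt 5 - 1) / 2)) - 1 / (q : ℝ)| ≤
        C * Real.exp (-(q : ℝ) * B (1 / ((q : ℝ) + 1 / ((n : ℝ) + (Real.sqrt 5 - 1) / 2)))) := by
  have hq0 : (0:ℝ) < q := by exact_mod_cast hq
  have hq1 : (1:ℝ) ≤ q := by exact_mod_cast hq
  set g : ℝ := (Real.sqrt 5 - 1) / 2 with hgdef
  have h5 : Real.sqrt 5 ^ 2 = 5 := Real.sq_sqrt (by norm_num)
  have h5n : 0 ≤ Real.sqrt 5 := Real.sqrt_nonneg 5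
  have hg0 : 0 < g := by
    rw [hgdef]
    nlinarith
  have hg1 : g < 1 := by
    rw [hgdef]
    nlinarith
  have h5irr : Irrational (Real.sqrt 5) := by
    have h : Irrational (Real.sqrt ((5:ℕ):ℝ)) := (by norm_num : Nat.Prime 5).irrational_sqrt
    simpa using h
  have hgirr : Irrational g := by
    have h := (h5irr.sub_natCast 1).div_natCast (m := 2) (by norm_num)
    rw [hgdef]
    simpa using h
  set A : ℝ := |B g| with hAdef
  have hA0 : 0 ≤ A := abs_nonneg _
  refine ⟨(q:ℝ)^(q-1) / q * Real.exp (-(1 + A)),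
          ((q:ℝ)+1)^(q-1) / q * Real.exp A, ?_, ?_, ?_⟩
  · have := Real.exp_pos (-(1+A))
    have h1 : (0:ℝ) < (q:ℝ)^(q-1) := pow_pos hq0 _
    positivity
  · have h1 : (q:ℝ)^(q-1)/q ≤ ((q:ℝ)+1)^(q-1)/q := by
      apply div_le_div_of_nonneg_right ?_ hq0.le
      exact pow_le_pow_left₀ hq0.le (by linarith) _
    exact mul_le_mul h1 (Real.exp_le_exp.mpr (by linarith)) (Real.exp_pos _).le
      (by positivity)
  · intro n hn
    have hn1 : (1:ℝ) ≤ n := by exact_mod_cast hn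
    set t : ℝ := (n:ℝ) + g with htdef
    have ht1 : 1 < t := by rw [htdef]; linarith
    have ht0 : 0 < t := by linarith
    have htne : t ≠ 0 := ne_of_gt ht0
    set s : ℝ := (q:ℝ) + 1/t with hsdef
    have hqs : (q:ℝ) < s := by
      rw [hsdef]
      have h : 0 < 1/t := by positivity
      linarith
    have hs1 : 1 < s := lt_of_le_of_lt hq1 hqs
    have hs0 : 0 < s := by linarith
    have hsne : s ≠ 0 := ne_of_gt hs0
    have hsle : s ≤ (q:ℝ) + 1 := by
      rw [hsdef]
      have : 1/t ≤ 1 := by rw [div_le_one ht0]; linarith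
      linarith
    set ω : ℝ := 1/s with hωdef
    have hω0 : 0 < ω := by positivity
    have hω1 : ω < 1 := by rw [hωdef, div_lt_one hs0]; exact hs1
    -- irrationality
    have htirr : Irrational t := by
      have h := hgirr.natCast_add n
      rwa [htdef]
    have h1tirr : Irrational (1/t) := by rw [one_div]; exact htirr.inv
    have hsirr : Irrational s := by
      have := h1tirr.natCast_add q
      rwa [hsdef]
    have hωirr : Irrational ω := by rw [hωdef, one_div]; exact hsirr.inv
    -- B values
    have h1t0 : 0 < 1/t := by positivity
    have h1t1 : 1/t < 1 := by rw [div_lt_one ht0]; exact ht1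
    have hBt : B t = B g := by
      have h := Bper_nat B hper n g
      rw [htdef, add_comm]
      exact h
    have hB1 : B (1/t) = Real.log t + 1/t * B g := by
      have h := heq (1/t) ⟨h1t0, h1t1⟩ h1tirr
      rw [one_div_one_div, hBt] at h
      rw [h, one_div, Real.log_inv, neg_neg]
    have hBs : B s = B (1/t) := by
      have h := Bper_nat B hper q (1/t)
      rw [hsdef, add_comm]
      exact h
    have hB2 : B ω = -Real.log ω + ω * (Real.log t + 1/t * B g) := by
      have h := heq ω ⟨hω0, hω1⟩ hωirr
      have h1ω : 1/ω = s := by rw [hωdef, one_div_one_div]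
      rw [h1ω, hBs, hB1] at h
      exact h
    clear_value t s ω
    -- exponential form
    set X : ℝ := (q:ℝ)*ω*Real.log t + (q:ℝ)*ω*(1/t*B g) with hXdef
    clear_value X
    have hexp : Real.exp (-(q:ℝ) * B ω) = ω^q * Real.exp (-X) := by
      have h : -(q:ℝ) * B ω = (q:ℝ) * Real.log ω + -X := by rw [hB2, hXdef]; ring
      rw [h, Real.exp_add, Real.exp_nat_mul, Real.exp_log hω0]
    -- eta value
    have hηval : |ω - 1/(q:ℝ)| = ω/((q:ℝ)*t) := by
      have h1 : ω - 1/(q:ℝ) = -(ω/((q:ℝ)*t)) := by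
        rw [hωdef, hsdef]
        field_simp
        ring
      rw [h1, abs_neg, abs_of_pos (div_pos hω0 (mul_pos hq0 ht0))]
    -- bounds on X
    have hlogt : 0 < Real.log t := Real.log_pos ht1
    have hlogle : Real.log t ≤ t := by
      have := Real.log_le_sub_one_of_pos ht0
      linarith
    have hqω1 : (q:ℝ)*ω < 1 := by
      rw [hωdef]
      rw [mul_one_div, div_lt_one hs0]
      exact hqs
    have hqω0 : 0 < (q:ℝ)*ω := mul_pos hq0 hω0
    have habs1 : (q:ℝ)*ω*(1/t*B g) ≤ A := by
      have hp0 : 0 ≤ (q:ℝ)*ω*(1/t) := mul_nonneg hqω0.le h1t0.le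
      have hp1 : (q:ℝ)*ω*(1/t) ≤ 1 := by nlinarith
      have h2 : (q:ℝ)*ω*(1/t*B g) = ((q:ℝ)*ω*(1/t)) * B g := by ring
      rw [h2]
      calc ((q:ℝ)*ω*(1/t)) * B g ≤ ((q:ℝ)*ω*(1/t)) * A :=
            mul_le_mul_of_nonneg_left (le_abs_self _) hp0
        _ ≤ 1 * A := mul_le_mul_of_nonneg_right hp1 hA0
        _ = A := one_mul A
    have habs2 : -A ≤ (q:ℝ)*ω*(1/t*B g) := by
      have hp0 : 0 ≤ (q:ℝ)*ω*(1/t) := mul_nonneg hqω0.le h1t0.le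
      have hp1 : (q:ℝ)*ω*(1/t) ≤ 1 := by nlinarith
      have h2 : (q:ℝ)*ω*(1/t*B g) = ((q:ℝ)*ω*(1/t)) * B g := by ring
      rw [h2]
      calc -A = 1 * (-A) := by ring
        _ ≤ ((q:ℝ)*ω*(1/t)) * (-A) :=
            mul_le_mul_of_nonpos_right hp1 (by linarith)
        _ ≤ ((q:ℝ)*ω*(1/t)) * B g :=
            mul_le_mul_of_nonneg_left (neg_abs_le _) hp0
    have hid : (q:ℝ)*ω = 1 - ω/t := by
      rw [hωdef, hsdef]
      field_simp
      ring
    have hXle : X ≤ Real.log t + A := by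
      rw [hXdef]
      have h1 : (q:ℝ)*ω*Real.log t ≤ Real.log t := by nlinarith
      linarith
    have hXge : Real.log t - (1 + A) ≤ X := by
      rw [hXdef]
      have h1 : ω * Real.log t ≤ t := by nlinarith
      have h2 : (ω/t) * Real.log t ≤ 1 := by
        rw [div_mul_eq_mul_div, div_le_one ht0]
        exact h1
      have h3 : Real.log t - 1 ≤ (q:ℝ)*ω*Real.log t := by
        rw [hid]
        nlinarith
      linarith
    have hE1 : Real.exp (-A) / t ≤ Real.exp (-X) := by
      have h : Real.exp (-A) / t = Real.exp (-A - Real.log t) := by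
        rw [Real.exp_sub, Real.exp_log ht0]
      rw [h]
      exact Real.exp_le_exp.mpr (by linarith)
    have hE2 : Real.exp (-X) ≤ Real.exp (1 + A) / t := by
      have h : Real.exp (1 + A) / t = Real.exp (1 + A - Real.log t) := by
        rw [Real.exp_sub, Real.exp_log ht0]
      rw [h]
      exact Real.exp_le_exp.mpr (by linarith)
    -- pow facts
    have hωlow : 1/((q:ℝ)+1) ≤ ω := by
      rw [hωdef]
      exact one_div_le_one_div_of_le hs0 hsle
    have hωhi : ω ≤ 1/(q:ℝ) := by
      rw [hωdef]
      exact one_div_le_one_div_of_le hq0 (le_of_lt hqs)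
    have hp1 : (1/((q:ℝ)+1))^(q-1) ≤ ω^(q-1) :=
      pow_le_pow_left₀ (by positivity) hωlow _
    have hp2 : ω^(q-1) ≤ (1/(q:ℝ))^(q-1) := pow_le_pow_left₀ hω0.le hωhi _
    have hωq : ω^q = ω^(q-1) * ω := by
      rw [← pow_succ]
      congr 1
      omega
    rw [hηval, hexp]
    constructor
    · have hcval : (q:ℝ)^(q-1) / q * Real.exp (-(1 + A)) *
          ((1/(q:ℝ))^(q-1) * ω * (Real.exp (1 + A)/t)) = ω/((q:ℝ)*t) := by
        rw [div_pow, one_pow, Real.exp_neg]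
        field_simp
      calc (q:ℝ)^(q-1) / q * Real.exp (-(1 + A)) * (ω^q * Real.exp (-X))
          = (q:ℝ)^(q-1) / q * Real.exp (-(1 + A)) * (ω^(q-1) * ω * Real.exp (-X)) := by
            rw [hωq]
        _ ≤ (q:ℝ)^(q-1) / q * Real.exp (-(1 + A)) *
              ((1/(q:ℝ))^(q-1) * ω * (Real.exp (1 + A)/t)) := by
            apply mul_le_mul_of_nonneg_left ?_ (by positivity)
            apply mul_le_mul ?_ hE2 (Real.exp_pos _).le
              (mul_nonneg (by positivity) hω0.le)
            exact mul_le_mul_of_nonneg_right hp2 hω0.le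
        _ = ω/((q:ℝ)*t) := hcval
    · have hCval : ((q:ℝ)+1)^(q-1) / q * Real.exp A *
          ((1/((q:ℝ)+1))^(q-1) * ω * (Real.exp (-A)/t)) = ω/((q:ℝ)*t) := by
        rw [div_pow, one_pow, Real.exp_neg]
        field_simp
      calc ω/((q:ℝ)*t) = ((q:ℝ)+1)^(q-1) / q * Real.exp A *
              ((1/((q:ℝ)+1))^(q-1) * ω * (Real.exp (-A)/t)) := hCval.symm
        _ ≤ ((q:ℝ)+1)^(q-1) / q * Real.exp A * (ω^(q-1) * ω * Real.exp (-X)) := by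
            apply mul_le_mul_of_nonneg_left ?_ (by positivity)
            apply mul_le_mul ?_ hE1 (div_nonneg (Real.exp_pos _).le ht0.le)
              (mul_nonneg (pow_nonneg hω0.le _) hω0.le)
            exact mul_le_mul_of_nonneg_right hp1 hω0.le
        _ = ((q:ℝ)+1)^(q-1) / q * Real.exp A * (ω^q * Real.exp (-X)) := by rw [hωq]
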